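/- Let x̄ ∈ F be a feasible point of (MPSC) and assume MPSC-RCRCQ holds at x̄. Then MPSC-SSOCQ holds at x̄. -/

import Mathlib

open Set Filter Topology Metric

noncomputable section

namespace MPSC

abbrev Vec (n : ℕ) := EuclideanSpace ℝ (Fin n)

variable {n m p l : ℕ}

open scoped Classical in
/-- Sum of a function over an index set (finite ambient type). -/
noncomputable def sumOver {α β : Type*} [Fintype α] [AddCommMonoid β]
    (S : Set α) (v : α → β) : β :=
  ∑ a, if a ∈ S then v a else 0

/-- The feasible set of (MPSC). -/
def Feas (g : Fin m → Vec n → ℝ) (h : Fin p → Vec n → ℝ)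
    (G H : Fin l → Vec n → ℝ) : Set (Vec n) :=
  {x | (∀ i, g i x ≤ 0) ∧ (∀ j, h j x = 0) ∧ ∀ k, G k x * H k x = 0}

/-- Index set of active inequality constraints. -/
def Ig (g : Fin m → Vec n → ℝ) (xb : Vec n) : Set (Fin m) := {i | g i xb = 0}

def IG (G H : Fin l → Vec n → ℝ) (xb : Vec n) : Set (Fin l) :=
  {k | G k xb = 0 ∧ H k xb ≠ 0}

def IH (G H : Fin l → Vec n → ℝ) (xb : Vec n) : Set (Fin l) :=
  {k | G k xb ≠ 0 ∧ H k xb = 0}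

def IGH (G H : Fin l → Vec n → ℝ) (xb : Vec n) : Set (Fin l) :=
  {k | G k xb = 0 ∧ H k xb = 0}

/-- (β1, β2) is a disjoint bipartition of I_GH. -/
def Partition (G H : Fin l → Vec n → ℝ) (xb : Vec n) (β1 β2 : Set (Fin l)) : Prop :=
  β1 ∩ β2 = ∅ ∧ β1 ∪ β2 = IGH G H xb

/-- Branch feasible set. -/
def BranchFeas (g : Fin m → Vec n → ℝ) (h : Fin p → Vec n → ℝ)
    (G H : Fin l → Vec n → ℝ) (xb : Vec n) (β1 β2 : Set (Fin l)) : Set (Vec n) :=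
  {x | (∀ i, g i x ≤ 0) ∧ (∀ j, h j x = 0) ∧
    (∀ k ∈ IG G H xb ∪ β1, G k x = 0) ∧ ∀ k ∈ IH G H xb ∪ β2, H k x = 0}

/-- Bouligand tangent cone, as defined in the paper. -/
def tangentCone (Ω : Set (Vec n)) (xb : Vec n) : Set (Vec n) :=
  {d | ∃ t : ℕ → ℝ, ∃ x : ℕ → Vec n, (∀ k, 0 ≤ t k) ∧ (∀ k, x k ∈ Ω) ∧
    Tendsto x atTop (nhds xb) ∧ Tendsto (fun k => t k • (x k - xb)) atTop (nhds d)}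

/-- MPSC linearization cone. -/
def LCone (g : Fin m → Vec n → ℝ) (h : Fin p → Vec n → ℝ)
    (G H : Fin l → Vec n → ℝ) (xb : Vec n) : Set (Vec n) :=
  {d | (∀ i ∈ Ig g xb, fderiv ℝ (g i) xb d ≤ 0) ∧ (∀ j, fderiv ℝ (h j) xb d = 0) ∧
    (∀ k ∈ IG G H xb, fderiv ℝ (G k) xb d = 0) ∧ (∀ k ∈ IH G H xb, fderiv ℝ (H k) xb d = 0) ∧
    ∀ k ∈ IGH G H xb, fderiv ℝ (G k) xb d * fderiv ℝ (H k) xb d = 0}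

/-- Branch linearization cone. -/
def BranchLCone (g : Fin m → Vec n → ℝ) (h : Fin p → Vec n → ℝ)
    (G H : Fin l → Vec n → ℝ) (xb : Vec n) (β1 β2 : Set (Fin l)) : Set (Vec n) :=
  {d | (∀ i ∈ Ig g xb, fderiv ℝ (g i) xb d ≤ 0) ∧ (∀ j, fderiv ℝ (h j) xb d = 0) ∧
    (∀ k ∈ IG G H xb ∪ β1, fderiv ℝ (G k) xb d = 0) ∧
    ∀ k ∈ IH G H xb ∪ β2, fderiv ℝ (H k) xb d = 0}

/-- MPSC critical subspace. -/
def CritSubspace (g : Fin m → Vec n → ℝ) (h : Fin p → Vec n → ℝ)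
    (G H : Fin l → Vec n → ℝ) (xb : Vec n) : Set (Vec n) :=
  {d | (∀ i ∈ Ig g xb, fderiv ℝ (g i) xb d = 0) ∧ (∀ j, fderiv ℝ (h j) xb d = 0) ∧
    (∀ k ∈ IG G H xb ∪ IGH G H xb, fderiv ℝ (G k) xb d = 0) ∧
    ∀ k ∈ IH G H xb ∪ IGH G H xb, fderiv ℝ (H k) xb d = 0}

/-- Rank (dimension of the span) of the family of gradients
{∇g_i(x)}_{i∈I1} ∪ {∇h_j(x)}_j ∪ {∇G_k(x)}_{k∈I3} ∪ {∇H_k(x)}_{k∈I4}. -/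
def gradRank (g : Fin m → Vec n → ℝ) (h : Fin p → Vec n → ℝ)
    (G H : Fin l → Vec n → ℝ) (I1 : Set (Fin m)) (I3 I4 : Set (Fin l)) (x : Vec n) : ℕ :=
  Module.finrank ℝ ↥(Submodule.span ℝ
    ((fun i => gradient (g i) x) '' I1 ∪ Set.range (fun j => gradient (h j) x) ∪
     (fun k => gradient (G k) x) '' I3 ∪ (fun k => gradient (H k) x) '' I4))

/-- MPSC-LICQ. -/
def LICQ (g : Fin m → Vec n → ℝ) (h : Fin p → Vec n → ℝ)
    (G H : Fin l → Vec n → ℝ) (xb : Vec n) : Prop :=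
  ∀ (lam : Fin m → ℝ) (ρ : Fin p → ℝ) (μ ν : Fin l → ℝ),
    (∀ i, i ∉ Ig g xb → lam i = 0) →
    (∀ k, k ∉ IG G H xb ∪ IGH G H xb → μ k = 0) →
    (∀ k, k ∉ IH G H xb ∪ IGH G H xb → ν k = 0) →
    ∑ i, lam i • gradient (g i) xb + ∑ j, ρ j • gradient (h j) xb +
      ∑ k, μ k • gradient (G k) xb + ∑ k, ν k • gradient (H k) xb = 0 →
    lam = 0 ∧ ρ = 0 ∧ μ = 0 ∧ ν = 0

/-- MPSC-RCRCQ. -/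
def RCRCQ (g : Fin m → Vec n → ℝ) (h : Fin p → Vec n → ℝ)
    (G H : Fin l → Vec n → ℝ) (xb : Vec n) : Prop :=
  ∃ ε > (0:ℝ), ∀ I1 : Set (Fin m), I1 ⊆ Ig g xb →
    ∀ I3 I4 : Set (Fin l), I3 ⊆ IGH G H xb → I4 ⊆ IGH G H xb →
      ∀ x : Vec n, ‖x - xb‖ < ε →
        gradRank g h G H I1 (I3 ∪ IG G H xb) (I4 ∪ IH G H xb) x =
        gradRank g h G H I1 (I3 ∪ IG G H xb) (I4 ∪ IH G H xb) xb

/-- MPSC-WCR. -/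
def WCR (g : Fin m → Vec n → ℝ) (h : Fin p → Vec n → ℝ)
    (G H : Fin l → Vec n → ℝ) (xb : Vec n) : Prop :=
  ∃ ε > (0:ℝ), ∀ x : Vec n, ‖x - xb‖ < ε →
    gradRank g h G H (Ig g xb) (IG G H xb ∪ IGH G H xb) (IH G H xb ∪ IGH G H xb) x =
    gradRank g h G H (Ig g xb) (IG G H xb ∪ IGH G H xb) (IH G H xb ∪ IGH G H xb) xb

/-- MPSC-PWCR. -/
def PWCR (g : Fin m → Vec n → ℝ) (h : Fin p → Vec n → ℝ)
    (G H : Fin l → Vec n → ℝ) (xb : Vec n) : Prop :=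
  ∀ β1 β2 : Set (Fin l), Partition G H xb β1 β2 →
    ∃ ε > (0:ℝ), ∀ x : Vec n, ‖x - xb‖ < ε →
      gradRank g h G H (Ig g xb) (IG G H xb ∪ β1) (IH G H xb ∪ β2) x =
      gradRank g h G H (Ig g xb) (IG G H xb ∪ β1) (IH G H xb ∪ β2) xb

/-- The index set I_g^- associated with a branch (β1, β2). -/
def IgMinus (g : Fin m → Vec n → ℝ) (h : Fin p → Vec n → ℝ)
    (G H : Fin l → Vec n → ℝ) (xb : Vec n) (β1 β2 : Set (Fin l)) : Set (Fin m) :=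
  {i | i ∈ Ig g xb ∧ ∃ (lam : Fin m → ℝ) (ρ : Fin p → ℝ) (μ ν : Fin l → ℝ),
    (∀ i', 0 ≤ lam i') ∧ (∀ i', i' ∉ Ig g xb \ {i} → lam i' = 0) ∧
    (∀ k, k ∉ IG G H xb ∪ β1 → μ k = 0) ∧ (∀ k, k ∉ IH G H xb ∪ β2 → ν k = 0) ∧
    -gradient (g i) xb = ∑ i', lam i' • gradient (g i') xb + ∑ j, ρ j • gradient (h j) xb +
      ∑ k, μ k • gradient (G k) xb + ∑ k, ν k • gradient (H k) xb}

/-- MPSC-PCRSC. -/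
def PCRSC (g : Fin m → Vec n → ℝ) (h : Fin p → Vec n → ℝ)
    (G H : Fin l → Vec n → ℝ) (xb : Vec n) : Prop :=
  ∀ β1 β2 : Set (Fin l), Partition G H xb β1 β2 →
    ∃ ε > (0:ℝ), ∀ x : Vec n, ‖x - xb‖ < ε →
      gradRank g h G H (IgMinus g h G H xb β1 β2) (IG G H xb ∪ β1) (IH G H xb ∪ β2) x =
      gradRank g h G H (IgMinus g h G H xb β1 β2) (IG G H xb ∪ β1) (IH G H xb ∪ β2) xb

/-- A twice differentiable arc on [0, δ) (one-sided at the endpoint 0),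
with first derivative ξ'. -/
def TwiceDiffArc (δ : ℝ) (ξ ξ' : ℝ → Vec n) : Prop :=
  (∀ t ∈ Ico (0:ℝ) δ, HasDerivWithinAt ξ (ξ' t) (Ico (0:ℝ) δ) t) ∧
  ∀ t ∈ Ico (0:ℝ) δ, DifferentiableWithinAt ℝ ξ' (Ico (0:ℝ) δ) t

/-- MPSC-SSOCQ. -/
def SSOCQ (g : Fin m → Vec n → ℝ) (h : Fin p → Vec n → ℝ)
    (G H : Fin l → Vec n → ℝ) (xb : Vec n) : Prop :=
  ∀ d ∈ LCone g h G H xb, d ≠ 0 →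
    ∃ δ > (0:ℝ), ∃ J K : Set (Fin l), J ⊆ IGH G H xb ∧ K ⊆ IGH G H xb ∧
      ∃ ξ ξ' : ℝ → Vec n, TwiceDiffArc δ ξ ξ' ∧
        (∀ t ∈ Ico (0:ℝ) δ, ξ t ∈ Feas g h G H) ∧
        ξ 0 = xb ∧ ξ' 0 = d ∧
        (∀ t ∈ Ico (0:ℝ) δ, ∀ i ∈ Ig g xb, fderiv ℝ (g i) xb d = 0 → g i (ξ t) = 0) ∧
        (∀ t ∈ Ico (0:ℝ) δ, ∀ k ∈ IG G H xb ∪ J, G k (ξ t) = 0) ∧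
        ∀ t ∈ Ico (0:ℝ) δ, ∀ k ∈ IH G H xb ∪ K, H k (ξ t) = 0

/-- MPSC-WSOCQ. -/
def WSOCQ (g : Fin m → Vec n → ℝ) (h : Fin p → Vec n → ℝ)
    (G H : Fin l → Vec n → ℝ) (xb : Vec n) : Prop :=
  ∀ d ∈ CritSubspace g h G H xb, d ≠ 0 →
    ∃ δ > (0:ℝ), ∃ J K : Set (Fin l), J ⊆ IGH G H xb ∧ K ⊆ IGH G H xb ∧
      ∃ ζ ζ' : ℝ → Vec n, TwiceDiffArc δ ζ ζ' ∧
        (∀ t ∈ Ico (0:ℝ) δ, ζ t ∈ Feas g h G H) ∧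
        ζ 0 = xb ∧ ζ' 0 = d ∧
        (∀ t ∈ Ico (0:ℝ) δ, ∀ i ∈ Ig g xb, g i (ζ t) = 0) ∧
        (∀ t ∈ Ico (0:ℝ) δ, ∀ k ∈ IG G H xb ∪ J, G k (ζ t) = 0) ∧
        ∀ t ∈ Ico (0:ℝ) δ, ∀ k ∈ IH G H xb ∪ K, H k (ζ t) = 0

/-- The S-stationarity system for multipliers (λ, ρ, μ, ν) at xb. -/
def SStationarySystem (f : Vec n → ℝ) (g : Fin m → Vec n → ℝ) (h : Fin p → Vec n → ℝ)
    (G H : Fin l → Vec n → ℝ) (xb : Vec n)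
    (lam : Fin m → ℝ) (ρ : Fin p → ℝ) (μ ν : Fin l → ℝ) : Prop :=
  (∀ i, 0 ≤ lam i) ∧ (∀ i, lam i * g i xb = 0) ∧
  (∀ k ∈ IH G H xb ∪ IGH G H xb, μ k = 0) ∧
  (∀ k ∈ IG G H xb ∪ IGH G H xb, ν k = 0) ∧
  gradient f xb + ∑ i, lam i • gradient (g i) xb + ∑ j, ρ j • gradient (h j) xb +
    ∑ k, μ k • gradient (G k) xb + ∑ k, ν k • gradient (H k) xb = 0

def SStationary (f : Vec n → ℝ) (g : Fin m → Vec n → ℝ) (h : Fin p → Vec n → ℝ)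
    (G H : Fin l → Vec n → ℝ) (xb : Vec n) : Prop :=
  ∃ (lam : Fin m → ℝ) (ρ : Fin p → ℝ) (μ ν : Fin l → ℝ),
    SStationarySystem f g h G H xb lam ρ μ ν

/-- The M-stationarity system for multipliers (λ, ρ, μ, ν) at xb. -/
def MStationarySystem (f : Vec n → ℝ) (g : Fin m → Vec n → ℝ) (h : Fin p → Vec n → ℝ)
    (G H : Fin l → Vec n → ℝ) (xb : Vec n)
    (lam : Fin m → ℝ) (ρ : Fin p → ℝ) (μ ν : Fin l → ℝ) : Prop :=
  (∀ i, 0 ≤ lam i) ∧ (∀ i, lam i * g i xb = 0) ∧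
  (∀ k ∈ IH G H xb, μ k = 0) ∧ (∀ k ∈ IG G H xb, ν k = 0) ∧
  (∀ k ∈ IGH G H xb, μ k * ν k = 0) ∧
  gradient f xb + ∑ i, lam i • gradient (g i) xb + ∑ j, ρ j • gradient (h j) xb +
    ∑ k, μ k • gradient (G k) xb + ∑ k, ν k • gradient (H k) xb = 0

def MStationary (f : Vec n → ℝ) (g : Fin m → Vec n → ℝ) (h : Fin p → Vec n → ℝ)
    (G H : Fin l → Vec n → ℝ) (xb : Vec n) : Prop :=
  ∃ (lam : Fin m → ℝ) (ρ : Fin p → ℝ) (μ ν : Fin l → ℝ),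
    MStationarySystem f g h G H xb lam ρ μ ν

/-- Local optimality for (MPSC). -/
def LocallyOptimal (f : Vec n → ℝ) (g : Fin m → Vec n → ℝ) (h : Fin p → Vec n → ℝ)
    (G H : Fin l → Vec n → ℝ) (xb : Vec n) : Prop :=
  xb ∈ Feas g h G H ∧ ∃ ε > (0:ℝ), ∀ x ∈ Feas g h G H, ‖x - xb‖ < ε → f xb ≤ f x

/-- Hessian quadratic form dᵀ∇²φ(x)d. -/
def hessForm (φ : Vec n → ℝ) (x d : Vec n) : ℝ :=
  iteratedFDeriv ℝ 2 φ x ![d, d]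

/-- The Lagrange function ℓ. -/
def lagr (f : Vec n → ℝ) (g : Fin m → Vec n → ℝ) (h : Fin p → Vec n → ℝ)
    (G H : Fin l → Vec n → ℝ)
    (lam : Fin m → ℝ) (ρ : Fin p → ℝ) (μ ν : Fin l → ℝ) : Vec n → ℝ :=
  fun x => f x + ∑ i, lam i * g i x + ∑ j, ρ j * h j x +
    ∑ k, μ k * G k x + ∑ k, ν k * H k x

/-- Constraint-violation residual. -/
def residual (g : Fin m → Vec n → ℝ) (h : Fin p → Vec n → ℝ)
    (G H : Fin l → Vec n → ℝ) (x : Vec n) : ℝ :=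
  Real.sqrt (∑ i, max (g i x) 0 ^ 2 + ∑ j, h j x ^ 2 + ∑ k, min (G k x ^ 2) (H k x ^ 2))

/-- Penalty function P_κ. -/
def Pen (f : Vec n → ℝ) (g : Fin m → Vec n → ℝ) (h : Fin p → Vec n → ℝ)
    (G H : Fin l → Vec n → ℝ) (κ : ℝ) (x : Vec n) : ℝ :=
  f x + κ * residual g h G H x

/-- MPSC piecewise second-order quasi-normality. -/
def PSOQN (g : Fin m → Vec n → ℝ) (h : Fin p → Vec n → ℝ)
    (G H : Fin l → Vec n → ℝ) (xb : Vec n) : Prop :=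
  ∀ β1 β2 : Set (Fin l), Partition G H xb β1 β2 →
    ¬ ∃ (lam : Fin m → ℝ) (ρ : Fin p → ℝ) (μ ν : Fin l → ℝ),
      (∀ i, 0 ≤ lam i) ∧
      (∀ k, k ∉ IG G H xb ∪ β1 → μ k = 0) ∧ (∀ k, k ∉ IH G H xb ∪ β2 → ν k = 0) ∧
      ¬(lam = 0 ∧ ρ = 0 ∧ μ = 0 ∧ ν = 0) ∧
      (∑ i, lam i • gradient (g i) xb + ∑ j, ρ j • gradient (h j) xb +
        ∑ k, μ k • gradient (G k) xb + ∑ k, ν k • gradient (H k) xb = 0) ∧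
      (∀ d : Vec n, (∀ i ∈ Ig g xb, fderiv ℝ (g i) xb d = 0) →
        (∀ j, fderiv ℝ (h j) xb d = 0) →
        (∀ k ∈ IG G H xb ∪ β1, fderiv ℝ (G k) xb d = 0) →
        (∀ k ∈ IH G H xb ∪ β2, fderiv ℝ (H k) xb d = 0) →
        0 ≤ ∑ i, lam i * hessForm (g i) xb d + ∑ j, ρ j * hessForm (h j) xb d +
          ∑ k, μ k * hessForm (G k) xb d + ∑ k, ν k * hessForm (H k) xb d) ∧
      ∃ xs : ℕ → Vec n, Tendsto xs atTop (nhds xb) ∧ ∀ s,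
        (∀ i, 0 < lam i → 0 < lam i * g i (xs s)) ∧
        (∀ j, ρ j ≠ 0 → 0 < ρ j * h j (xs s)) ∧
        (∀ k, μ k ≠ 0 → 0 < μ k * G k (xs s)) ∧
        (∀ k, ν k ≠ 0 → 0 < ν k * H k (xs s))

set_option maxHeartbeats 1600000

lemma inner_grad {n : ℕ} (f : Vec n → ℝ) (x v : Vec n) :
    (inner ℝ (gradient f x) v : ℝ) = fderiv ℝ f x v :=
  InnerProductSpace.toDual_symm_apply

lemma grad_cont {n : ℕ} (f : Vec n → ℝ) (hf : ContDiff ℝ 2 f) :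
    Continuous (fun x => gradient f x) :=
  (InnerProductSpace.toDual ℝ (Vec n)).symm.continuous.comp (hf.continuous_fderiv two_ne_zero)

lemma arc_of_crank {n : ℕ} {ι : Type*} [Fintype ι] (φ : ι → Vec n → ℝ)
    (hφ : ∀ e, ContDiff ℝ 2 (φ e)) (xb d : Vec n)
    (h0 : ∀ e, φ e xb = 0) (hder0 : ∀ e, fderiv ℝ (φ e) xb d = 0)
    (ε : ℝ) (hε : 0 < ε)
    (hr : ∀ x : Vec n, ‖x - xb‖ < ε →
      Module.finrank ℝ ↥(Submodule.span ℝ (range fun e => gradient (φ e) x)) =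
      Module.finrank ℝ ↥(Submodule.span ℝ (range fun e => gradient (φ e) xb))) :
    ∃ δ > (0:ℝ), ∃ ξ : ℝ → Vec n, ContDiffOn ℝ 2 ξ (Ioo (-δ) δ) ∧ ξ 0 = xb ∧
      HasDerivAt ξ d 0 ∧ ∀ t ∈ Ioo (-δ) δ, ∀ e, φ e (ξ t) = 0 := by
  classical
  set W : Vec n → ι → Vec n := fun x e => gradient (φ e) x with hW
  have hWcont : ∀ e, Continuous (fun x => W x e) := fun e => grad_cont _ (hφ e)
  obtain ⟨b, hbs, hbspan, hbli⟩ := exists_linearIndependent ℝ (range (W xb))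
  have hbfin : b.Finite := (Set.finite_range (W xb)).subset hbs
  haveI : Fintype b := hbfin.fintype
  have hσ : ∀ v : b, ∃ e : ι, W xb e = (v : Vec n) := fun v => hbs v.2
  choose σ hσval using hσ
  set V : Vec n → b → Vec n := fun x v => W x (σ v) with hV
  have hVxb : V xb = (Subtype.val : b → Vec n) := funext fun v => hσval v
  have hVli : LinearIndependent ℝ (V xb) := by rw [hVxb]; exact hbli
  have hVcont : Continuous (fun x => V x) := continuous_pi fun v => hWcont (σ v)
  have hopen : IsOpen {x : Vec n | LinearIndependent ℝ (V x)} :=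
    isOpen_setOf_linearIndependent.preimage hVcont
  set Ω : Set (Vec n) := {x | LinearIndependent ℝ (V x)} ∩ Metric.ball xb ε with hΩ
  have hΩopen : IsOpen Ω := hopen.inter Metric.isOpen_ball
  have hxbΩ : xb ∈ Ω := ⟨hVli, by simp [hε]⟩
  -- span equality on Ω
  have spanEq : ∀ x ∈ Ω, Submodule.span ℝ (range (V x)) = Submodule.span ℝ (range (W x)) := by
    rintro x ⟨hx1, hx2⟩
    rw [mem_ball_iff_norm] at hx2
    have hle : Submodule.span ℝ (range (V x)) ≤ Submodule.span ℝ (range (W x)) :=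
      Submodule.span_mono (by rintro _ ⟨v, rfl⟩; exact ⟨σ v, rfl⟩)
    have hcard : Module.finrank ℝ ↥(Submodule.span ℝ (range (V x))) = Fintype.card b :=
      finrank_span_eq_card hx1
    have h1 : Submodule.span ℝ (range ((↑) : b → Vec n)) = Submodule.span ℝ b := by
      rw [Subtype.range_coe]
    have hcard2 : Module.finrank ℝ ↥(Submodule.span ℝ (range (W xb))) = Fintype.card b := by
      rw [← hbspan, ← h1]; exact finrank_span_eq_card hbli
    exact Submodule.eq_of_le_of_finrank_le hle (by rw [hr x hx2, hcard2, hcard])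
  -- the continuous linear map (b → ℝ) → Vec n
  set Acl : (b → ℝ) →L[ℝ] Vec n :=
    ∑ v : b, (ContinuousLinearMap.proj v).smulRight (v : Vec n) with hAcl
  have hAapp : ∀ z : b → ℝ, Acl z = ∑ v : b, z v • (v : Vec n) := by
    intro z
    simp [hAcl, ContinuousLinearMap.sum_apply]
  have hAzero : ∀ z : b → ℝ, ((∀ v : b, (inner ℝ (v : Vec n) (Acl z) : ℝ) = 0) → Acl z = 0) := by
    intro z hz
    have : (inner ℝ (Acl z) (Acl z) : ℝ) = 0 := by
      nth_rewrite 1 [hAapp z]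
      rw [sum_inner]
      simp only [real_inner_smul_left]
      refine Finset.sum_eq_zero fun v _ => ?_
      rw [hz v, mul_zero]
    exact inner_self_eq_zero.mp this
  -- the Gram endomorphism
  set glm : (b → ℝ) →ₗ[ℝ] (b → ℝ) :=
    { toFun := fun z v => (inner ℝ (v : Vec n) (Acl z) : ℝ)
      map_add' := by intro z1 z2; funext v; simp [inner_add_right]
      map_smul' := by intro c z; funext v; simp [inner_smul_right] } with hglm
  have hglm_inj : Function.Injective glm := by
    rw [← LinearMap.ker_eq_bot, LinearMap.ker_eq_bot']
    intro z hz
    have hz' : ∀ v : b, (inner ℝ (v : Vec n) (Acl z) : ℝ) = 0 := fun v => congrFun hz v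
    have hA0 : Acl z = 0 := hAzero z hz'
    rw [hAapp] at hA0
    have := Fintype.linearIndependent_iff.mp hVli z (by rw [hVxb]; exact hA0)
    funext v; exact this v
  set gEquiv : (b → ℝ) ≃L[ℝ] (b → ℝ) :=
    (LinearEquiv.ofInjectiveEndo glm hglm_inj).toContinuousLinearEquiv with hgEquiv
  have hgEquiv_apply : ∀ z, gEquiv z = glm z := fun z => rfl
  -- the affine parametrization
  set L' : (ℝ × (b → ℝ)) →L[ℝ] Vec n :=
    (ContinuousLinearMap.fst ℝ ℝ (b → ℝ)).smulRight d +
      Acl.comp (ContinuousLinearMap.snd ℝ ℝ (b → ℝ)) with hL'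
  have hL'app : ∀ q : ℝ × (b → ℝ), L' q = q.1 • d + Acl q.2 := fun q => rfl
  set Lmap : ℝ × (b → ℝ) → Vec n := fun q => xb + L' q with hLmap
  have hLmap00 : Lmap (0, 0) = xb := by simp [hLmap, hL'app]
  set χ : ℝ × (b → ℝ) → (b → ℝ) := fun q v => φ (σ v) (Lmap q) with hχ
  set Ψ : ℝ × (b → ℝ) → ℝ × (b → ℝ) := fun q => (q.1, χ q) with hΨdef
  have hΨ00 : Ψ (0, 0) = (0, 0) := by
    refine Prod.ext rfl ?_
    funext v
    simp only [hΨdef, hχ, hLmap00]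
    exact h0 (σ v)
  -- smoothness of Ψ
  have hLsm : ContDiff ℝ 2 Lmap := by
    exact contDiff_const.add (L'.contDiff)
  have hχsm : ContDiff ℝ 2 χ :=
    contDiff_pi.mpr fun v => (hφ (σ v)).comp hLsm
  have hΨsm : ContDiff ℝ 2 Ψ := contDiff_fst.prodMk hχsm
  -- derivative of Ψ at (0,0)
  set eΨ : (ℝ × (b → ℝ)) ≃L[ℝ] (ℝ × (b → ℝ)) :=
    (ContinuousLinearEquiv.refl ℝ ℝ).prodCongr gEquiv with heΨ
  have hχv : ∀ v : b, HasFDerivAt (fun q => χ q v)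
      ((fderiv ℝ (φ (σ v)) xb).comp L') (0, 0) := by
    intro v
    have h1 : HasFDerivAt (φ (σ v)) (fderiv ℝ (φ (σ v)) xb) (Lmap (0,0)) := by
      rw [hLmap00]
      exact ((hφ (σ v)).differentiable two_ne_zero).differentiableAt.hasFDerivAt
    have h2 : HasFDerivAt Lmap L' (0, 0) := L'.hasFDerivAt.const_add xb
    exact h1.comp (0, 0) h2
  have hΨ' : HasFDerivAt Ψ (eΨ : (ℝ × (b → ℝ)) →L[ℝ] (ℝ × (b → ℝ))) (0, 0) := by
    have hfst : HasFDerivAt (fun q : ℝ × (b → ℝ) => q.1)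
        (ContinuousLinearMap.fst ℝ ℝ (b → ℝ)) (0, 0) := hasFDerivAt_fst
    have hχ' : HasFDerivAt χ
        (ContinuousLinearMap.pi fun v => (fderiv ℝ (φ (σ v)) xb).comp L') (0, 0) :=
      hasFDerivAt_pi.2 hχv
    have heq : (eΨ : (ℝ × (b → ℝ)) →L[ℝ] (ℝ × (b → ℝ))) =
        (ContinuousLinearMap.fst ℝ ℝ (b → ℝ)).prod
          (ContinuousLinearMap.pi fun v => (fderiv ℝ (φ (σ v)) xb).comp L') := by
      apply ContinuousLinearMap.ext
      intro q
      refine Prod.ext rfl (funext fun v => ?_)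
      show gEquiv q.2 v = (fderiv ℝ (φ (σ v)) xb) (L' q)
      rw [hgEquiv_apply]
      show (inner ℝ (v : Vec n) (Acl q.2) : ℝ) = _
      rw [hL'app, map_add, map_smul, hder0 (σ v), ← inner_grad,
        show gradient (φ (σ v)) xb = (v : Vec n) from hσval v]
      simp
    rw [heq]
    exact hfst.prodMk hχ'
  -- apply the inverse function theorem
  have hΨc : ContDiffAt ℝ 2 Ψ (0, 0) := hΨsm.contDiffAt
  set ψ : ℝ × (b → ℝ) → ℝ × (b → ℝ) := hΨc.localInverse hΨ' two_ne_zero with hψdef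
  have hψc : ContDiffAt ℝ 2 ψ (0, 0) := by
    have := hΨc.to_localInverse hΨ' two_ne_zero
    rwa [hΨ00] at this
  have hψ00 : ψ (0, 0) = (0, 0) := by
    have := hΨc.localInverse_apply_image hΨ' two_ne_zero
    rwa [hΨ00] at this
  have hstrict : HasStrictFDerivAt Ψ (eΨ : (ℝ × (b → ℝ)) →L[ℝ] (ℝ × (b → ℝ))) (0, 0) :=
    hΨc.hasStrictFDerivAt' hΨ' two_ne_zero
  have hrinv : ∀ᶠ y in 𝓝 ((0:ℝ), (0 : b → ℝ)), Ψ (ψ y) = y := by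
    have h1 := hstrict.eventually_right_inverse
    rw [hΨ00] at h1
    exact h1
  -- the curve
  set yf : ℝ → (b → ℝ) := fun t => (ψ (t, 0)).2 with hyf
  set ξ : ℝ → Vec n := fun t => xb + L' (t, yf t) with hξdef
  have htend : Tendsto (fun t : ℝ => ((t, (0 : b → ℝ)) : ℝ × (b → ℝ))) (𝓝 0) (𝓝 (0, 0)) := by
    have h1 : Continuous (fun t : ℝ => ((t, (0 : b → ℝ)) : ℝ × (b → ℝ))) :=
      continuous_id.prodMk continuous_const
    exact h1.continuousAt (x := (0:ℝ))
  have hevt : ∀ᶠ t in 𝓝 (0:ℝ), Ψ (ψ (t, 0)) = (t, 0) := htend.eventually hrinv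
  have hzero_v : ∀ᶠ t in 𝓝 (0:ℝ), ∀ v : b, φ (σ v) (ξ t) = 0 := by
    filter_upwards [hevt] with t ht v
    have h1 : (ψ (t, 0)).1 = t := congrArg Prod.fst ht
    have hpair : ψ (t, 0) = (t, yf t) := Prod.ext h1 rfl
    have h2 : χ (ψ (t, 0)) = 0 := congrArg Prod.snd ht
    have h3 := congrFun h2 v
    have h4 : φ (σ v) (Lmap (ψ (t, 0))) = 0 := h3
    rwa [hpair] at h4
  have hyf0 : yf 0 = 0 := by
    show (ψ (0, 0)).2 = 0
    rw [hψ00]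
  have hξ0 : ξ 0 = xb := by
    show xb + L' (0, yf 0) = xb
    rw [hyf0]
    simp [hL'app]
  -- smoothness of ξ near 0
  have hyfc : ContDiffAt ℝ 2 yf 0 := by
    have hmk : ContDiffAt ℝ 2 (fun t : ℝ => ((t, (0 : b → ℝ)) : ℝ × (b → ℝ))) 0 :=
      (contDiff_id.prodMk contDiff_const).contDiffAt
    have h1 : ContDiffAt ℝ 2 (ψ ∘ fun t : ℝ => ((t, (0 : b → ℝ)) : ℝ × (b → ℝ))) 0 :=
      ContDiffAt.comp 0 hψc hmk
    have h2 : ContDiffAt ℝ 2 (Prod.snd ∘ (ψ ∘ fun t : ℝ => ((t, (0 : b → ℝ)) : ℝ × (b → ℝ)))) 0 :=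
      ContDiffAt.comp 0 contDiff_snd.contDiffAt h1
    exact h2
  have hξc : ContDiffAt ℝ 2 ξ 0 :=
    contDiffAt_const.add ((L'.contDiff.contDiffAt).comp 0 (contDiffAt_id.prodMk hyfc))
  -- derivative of ξ at 0
  have hyfd : DifferentiableAt ℝ yf 0 := hyfc.differentiableAt two_ne_zero
  obtain ⟨w, hw⟩ : ∃ w, HasDerivAt yf w 0 := ⟨deriv yf 0, hyfd.hasDerivAt⟩
  have hξd' : HasDerivAt ξ (d + Acl w) 0 := by
    have hpair : HasDerivAt (fun t : ℝ => ((t, yf t) : ℝ × (b → ℝ))) ((1:ℝ), w) 0 :=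
      (hasDerivAt_id (0:ℝ)).prodMk hw
    have h1 : HasDerivAt (fun t : ℝ => L' (t, yf t)) (L' ((1:ℝ), w)) 0 :=
      L'.hasFDerivAt.comp_hasDerivAt 0 hpair
    have h2 : L' ((1:ℝ), w) = d + Acl w := by rw [hL'app]; simp
    rw [h2] at h1
    exact h1.const_add xb
  have hAw : Acl w = 0 := by
    apply hAzero
    intro v
    have hφd : HasFDerivAt (φ (σ v)) (fderiv ℝ (φ (σ v)) xb) (ξ 0) := by
      rw [hξ0]
      exact ((hφ (σ v)).differentiable two_ne_zero).differentiableAt.hasFDerivAt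
    have hq : HasDerivAt (fun t => φ (σ v) (ξ t)) (fderiv ℝ (φ (σ v)) xb (d + Acl w)) 0 :=
      hφd.comp_hasDerivAt 0 hξd'
    have hev0 : (fun t => φ (σ v) (ξ t)) =ᶠ[𝓝 (0:ℝ)] fun _ => (0:ℝ) :=
      hzero_v.mono fun t ht => ht v
    have h0' : HasDerivAt (fun _ : ℝ => (0:ℝ)) (fderiv ℝ (φ (σ v)) xb (d + Acl w)) 0 :=
      hq.congr_of_eventuallyEq hev0.symm
    have huniq : fderiv ℝ (φ (σ v)) xb (d + Acl w) = 0 := h0'.unique (hasDerivAt_const 0 0)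
    rw [map_add, hder0 (σ v), zero_add, ← inner_grad,
      show gradient (φ (σ v)) xb = (v : Vec n) from hσval v] at huniq
    exact huniq
  have hξd : HasDerivAt ξ d 0 := by
    rw [hAw, add_zero] at hξd'
    exact hξd'
  -- choose δ
  obtain ⟨u, hu, hcd⟩ := hξc.contDiffOn le_rfl (by simp)
  have hcd' : ContDiffOn ℝ 2 ξ (interior u) := hcd.mono interior_subset
  have huint : interior u ∈ 𝓝 (0:ℝ) := interior_mem_nhds.mpr hu
  have hΩev : ∀ᶠ t in 𝓝 (0:ℝ), ξ t ∈ Ω := by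
    have : Ω ∈ 𝓝 (ξ 0) := hΩopen.mem_nhds (by rw [hξ0]; exact hxbΩ)
    exact hξc.continuousAt this
  have hmem : (interior u ∩ ({t | ξ t ∈ Ω} ∩ {t | ∀ v : b, φ (σ v) (ξ t) = 0})) ∈ 𝓝 (0:ℝ) :=
    Filter.inter_mem huint (Filter.inter_mem hΩev hzero_v)
  rw [Metric.mem_nhds_iff] at hmem
  obtain ⟨δ, hδpos, hsub⟩ := hmem
  have hIoo : ∀ t ∈ Ioo (-δ) δ, t ∈ interior u ∧ ξ t ∈ Ω ∧ ∀ v : b, φ (σ v) (ξ t) = 0 := by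
    intro t ht
    have := hsub (mem_ball_zero_iff.mpr (abs_lt.mpr ⟨ht.1, ht.2⟩))
    exact ⟨this.1, this.2.1, this.2.2⟩
  refine ⟨δ, hδpos, ξ, hcd'.mono (fun t ht => (hIoo t ht).1), hξ0, hξd, ?_⟩
  intro t ht e
  -- derivative of φ e ∘ ξ vanishes on Ioo
  have hder : ∀ s ∈ Ioo (-δ) δ, HasDerivAt (fun r => φ e (ξ r)) 0 s := by
    intro s hs
    obtain ⟨hsu, hsΩ, hsz⟩ := hIoo s hs
    have hξdiff : DifferentiableAt ℝ ξ s :=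
      ((hcd'.differentiableOn two_ne_zero).differentiableAt (isOpen_interior.mem_nhds hsu))
    obtain ⟨c, hc⟩ : ∃ c, HasDerivAt ξ c s := ⟨deriv ξ s, hξdiff.hasDerivAt⟩
    have hvz : ∀ v : b, (inner ℝ (W (ξ s) (σ v)) c : ℝ) = 0 := by
      intro v
      have hzv : (fun r => φ (σ v) (ξ r)) =ᶠ[𝓝 s] fun _ => (0:ℝ) := by
        have : Ioo (-δ) δ ∈ 𝓝 s := isOpen_Ioo.mem_nhds hs
        exact Filter.eventually_of_mem this fun r hr => (hIoo r hr).2.2 v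
      have hφd : HasFDerivAt (φ (σ v)) (fderiv ℝ (φ (σ v)) (ξ s)) (ξ s) :=
        ((hφ (σ v)).differentiable two_ne_zero).differentiableAt.hasFDerivAt
      have hq : HasDerivAt (fun r => φ (σ v) (ξ r)) (fderiv ℝ (φ (σ v)) (ξ s) c) s :=
        hφd.comp_hasDerivAt s hc
      have h0' : HasDerivAt (fun _ : ℝ => (0:ℝ)) (fderiv ℝ (φ (σ v)) (ξ s) c) s :=
        hq.congr_of_eventuallyEq hzv.symm
      have huniq : fderiv ℝ (φ (σ v)) (ξ s) c = 0 := h0'.unique (hasDerivAt_const s 0)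
      rw [← inner_grad] at huniq
      exact huniq
    have hspanmem : gradient (φ e) (ξ s) ∈ Submodule.span ℝ (range (V (ξ s))) := by
      rw [spanEq (ξ s) hsΩ]
      exact Submodule.subset_span ⟨e, rfl⟩
    have hinner : (inner ℝ (gradient (φ e) (ξ s)) c : ℝ) = 0 := by
      refine Submodule.span_induction ?_ ?_ ?_ ?_ hspanmem
      · rintro _ ⟨v, rfl⟩
        exact hvz v
      · exact inner_zero_left c
      · intro y z _ _ hy hz
        rw [inner_add_left, hy, hz, add_zero]
      · intro a y _ hy
        rw [real_inner_smul_left, hy, mul_zero]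
    have hφd : HasFDerivAt (φ e) (fderiv ℝ (φ e) (ξ s)) (ξ s) :=
      ((hφ e).differentiable two_ne_zero).differentiableAt.hasFDerivAt
    have := hφd.comp_hasDerivAt s hc
    rwa [show fderiv ℝ (φ e) (ξ s) c = 0 from by rw [← inner_grad]; exact hinner] at this
  -- constancy on Ioo
  have h0mem : (0:ℝ) ∈ Ioo (-δ) δ := ⟨by linarith, hδpos⟩
  have hdiff : DifferentiableOn ℝ (fun r => φ e (ξ r)) (Ioo (-δ) δ) := fun s hs =>
    ((hder s hs).differentiableAt).differentiableWithinAt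
  have hf0 : ∀ s ∈ Ioo (-δ) δ, fderivWithin ℝ (fun r => φ e (ξ r)) (Ioo (-δ) δ) s = 0 := by
    intro s hs
    rw [fderivWithin_of_isOpen isOpen_Ioo hs]
    have : HasFDerivAt (fun r => φ e (ξ r)) ((1 : ℝ →L[ℝ] ℝ).smulRight 0) s :=
      (hder s hs).hasFDerivAt
    rw [this.fderiv]
    ext
    simp
  have hconst := Convex.is_const_of_fderivWithin_eq_zero (convex_Ioo (-δ) δ) hdiff hf0 ht h0mem
  rw [hξ0, h0 e] at hconst
  exact hconst

theorem rcrcq_implies_ssocq {n m p l : ℕ} (f : Vec n → ℝ) (g : Fin m → Vec n → ℝ)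
    (h : Fin p → Vec n → ℝ) (G H : Fin l → Vec n → ℝ)
    (hf : ContDiff ℝ 2 f) (hg : ∀ i, ContDiff ℝ 2 (g i)) (hh : ∀ j, ContDiff ℝ 2 (h j))
    (hG : ∀ k, ContDiff ℝ 2 (G k)) (hH : ∀ k, ContDiff ℝ 2 (H k))
    (xb : Vec n) (hxb : xb ∈ Feas g h G H)
    (hcq : RCRCQ g h G H xb) : SSOCQ g h G H xb := by
  classical
  rintro d ⟨hdg, hdh, hdG, hdH, hdGH⟩ hd0
  obtain ⟨hfg, hfh, hfGH⟩ := hxb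
  obtain ⟨ε, hε, hcq'⟩ := hcq
  -- index sets
  set I1 : Set (Fin m) := {i | i ∈ Ig g xb ∧ fderiv ℝ (g i) xb d = 0} with hI1def
  set J : Set (Fin l) := {k | k ∈ IGH G H xb ∧ fderiv ℝ (G k) xb d = 0} with hJdef
  set K : Set (Fin l) := {k | k ∈ IGH G H xb ∧ fderiv ℝ (H k) xb d = 0} with hKdef
  have hI1 : I1 ⊆ Ig g xb := fun i hi => hi.1
  have hJ : J ⊆ IGH G H xb := fun k hk => hk.1
  have hK : K ⊆ IGH G H xb := fun k hk => hk.1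
  have hrank := hcq' I1 hI1 J K hJ hK
  -- the family of active constraints
  set ι0 : Type := Fin m ⊕ (Fin p ⊕ (Fin l ⊕ Fin l)) with hι0
  set Φf : ι0 → Vec n → ℝ := Sum.elim g (Sum.elim h (Sum.elim G H)) with hΦf
  set E : Set ι0 := {e | Sum.elim (· ∈ I1)
    (Sum.elim (fun _ => True) (Sum.elim (· ∈ J ∪ IG G H xb) (· ∈ K ∪ IH G H xb))) e} with hE
  haveI : Fintype ↥E := (Set.toFinite E).fintype
  -- translation of the gradient families
  have hsetEq : ∀ x : Vec n,
      ((fun i => gradient (g i) x) '' I1 ∪ Set.range (fun j => gradient (h j) x) ∪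
        (fun k => gradient (G k) x) '' (J ∪ IG G H xb) ∪
        (fun k => gradient (H k) x) '' (K ∪ IH G H xb)) =
      range (fun e : ↥E => gradient (Φf e.1) x) := by
    intro x
    ext v
    constructor
    · rintro (((⟨i, hi, rfl⟩ | ⟨j, rfl⟩) | ⟨k, hk, rfl⟩) | ⟨k, hk, rfl⟩)
      · exact ⟨⟨Sum.inl i, hi⟩, rfl⟩
      · exact ⟨⟨Sum.inr (Sum.inl j), trivial⟩, rfl⟩
      · exact ⟨⟨Sum.inr (Sum.inr (Sum.inl k)), hk⟩, rfl⟩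
      · exact ⟨⟨Sum.inr (Sum.inr (Sum.inr k)), hk⟩, rfl⟩
    · rintro ⟨⟨e, he⟩, rfl⟩
      rcases e with i | j | k | k
      · exact Or.inl (Or.inl (Or.inl ⟨i, he, rfl⟩))
      · exact Or.inl (Or.inl (Or.inr ⟨j, rfl⟩))
      · exact Or.inl (Or.inr ⟨k, he, rfl⟩)
      · exact Or.inr ⟨k, he, rfl⟩
  have hr' : ∀ x : Vec n, ‖x - xb‖ < ε →
      Module.finrank ℝ ↥(Submodule.span ℝ (range fun e : ↥E => gradient (Φf e.1) x)) =
      Module.finrank ℝ ↥(Submodule.span ℝ (range fun e : ↥E => gradient (Φf e.1) xb)) := by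
    intro x hx
    have := hrank x hx
    unfold gradRank at this
    rw [hsetEq x, hsetEq xb] at this
    exact this
  -- active constraints vanish at xb and have zero directional derivative
  have h0E : ∀ e : ↥E, Φf e.1 xb = 0 := by
    rintro ⟨e, he⟩
    rcases e with i | j | k | k
    · exact he.1
    · exact hfh j
    · rcases he with hk | hk
      · exact hk.1.1
      · exact hk.1
    · rcases he with hk | hk
      · exact hk.1.2
      · exact hk.2
  have hder0E : ∀ e : ↥E, fderiv ℝ (Φf e.1) xb d = 0 := by
    rintro ⟨e, he⟩
    rcases e with i | j | k | k
    · exact he.2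
    · exact hdh j
    · rcases he with hk | hk
      · exact hk.2
      · exact hdG k hk
    · rcases he with hk | hk
      · exact hk.2
      · exact hdH k hk
  have hφE : ∀ e : ↥E, ContDiff ℝ 2 (Φf e.1) := by
    rintro ⟨e, he⟩
    rcases e with i | j | k | k
    · exact hg i
    · exact hh j
    · exact hG k
    · exact hH k
  -- construct the arc
  obtain ⟨δ₀, hδ₀, ξ, hξsm, hξ0, hξd, hzero⟩ :=
    arc_of_crank (fun e : ↥E => Φf e.1) hφE xb d h0E hder0E ε hε hr'
  -- individual vanishing facts
  have hzg : ∀ t ∈ Ioo (-δ₀) δ₀, ∀ i ∈ I1, g i (ξ t) = 0 := fun t ht i hi =>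
    hzero t ht ⟨Sum.inl i, hi⟩
  have hzh : ∀ t ∈ Ioo (-δ₀) δ₀, ∀ j, h j (ξ t) = 0 := fun t ht j =>
    hzero t ht ⟨Sum.inr (Sum.inl j), trivial⟩
  have hzG : ∀ t ∈ Ioo (-δ₀) δ₀, ∀ k ∈ J ∪ IG G H xb, G k (ξ t) = 0 := fun t ht k hk =>
    hzero t ht ⟨Sum.inr (Sum.inr (Sum.inl k)), hk⟩
  have hzH : ∀ t ∈ Ioo (-δ₀) δ₀, ∀ k ∈ K ∪ IH G H xb, H k (ξ t) = 0 := fun t ht k hk =>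
    hzero t ht ⟨Sum.inr (Sum.inr (Sum.inr k)), hk⟩
  -- inequality constraints hold for small positive times
  have hineq : ∀ᶠ t in 𝓝[>] (0:ℝ), ∀ i : Fin m, g i (ξ t) ≤ 0 := by
    rw [Filter.eventually_all]
    intro i
    by_cases hig : i ∈ Ig g xb
    · by_cases hid : fderiv ℝ (g i) xb d = 0
      · have : Ioo (-δ₀) δ₀ ∈ 𝓝 (0:ℝ) := isOpen_Ioo.mem_nhds ⟨by linarith, hδ₀⟩
        refine Filter.Eventually.filter_mono nhdsWithin_le_nhds ?_
        exact Filter.eventually_of_mem this fun t ht => le_of_eq (hzg t ht i ⟨hig, hid⟩)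
      · -- strictly negative directional derivative
        have hc : fderiv ℝ (g i) xb d < 0 := lt_of_le_of_ne (hdg i hig) hid
        have hq : HasDerivAt (fun t => g i (ξ t)) (fderiv ℝ (g i) xb d) 0 := by
          have hφd : HasFDerivAt (g i) (fderiv ℝ (g i) xb) (ξ 0) := by
            rw [hξ0]
            exact ((hg i).differentiable two_ne_zero).differentiableAt.hasFDerivAt
          exact hφd.comp_hasDerivAt 0 hξd
        have hslope := hasDerivAt_iff_tendsto_slope.mp hq
        have hmono : 𝓝[>] (0:ℝ) ≤ 𝓝[≠] (0:ℝ) :=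
          nhdsWithin_mono 0 fun x hx => ne_of_gt hx
        have hev : ∀ᶠ t in 𝓝[>] (0:ℝ), slope (fun t => g i (ξ t)) 0 t < 0 :=
          (hslope.mono_left hmono).eventually_lt_const hc
        filter_upwards [hev, self_mem_nhdsWithin] with t hst (htpos : 0 < t)
        have h1 : slope (fun t => g i (ξ t)) 0 t = g i (ξ t) / t := by
          rw [slope_def_field]
          rw [hξ0, show g i xb = 0 from hig]
          simp [div_eq_div_iff]
        rw [h1] at hst
        have := mul_neg_of_neg_of_pos hst htpos
        rw [div_mul_cancel₀ _ (ne_of_gt htpos)] at this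
        exact le_of_lt this
    · -- inactive constraint
      have hlt : g i xb < 0 := lt_of_le_of_ne (hfg i) hig
      have hcont : ContinuousAt (fun t => g i (ξ t)) 0 :=
        ((hg i).continuous.continuousAt).comp hξd.continuousAt
      have : ∀ᶠ t in 𝓝 (0:ℝ), g i (ξ t) < 0 := by
        have hmem : Iio (0:ℝ) ∈ 𝓝 (g i (ξ 0)) := by
          rw [hξ0]
          exact isOpen_Iio.mem_nhds hlt
        exact Filter.eventually_of_mem (hcont.preimage_mem_nhds hmem) fun t ht => ht
      exact Filter.Eventually.filter_mono nhdsWithin_le_nhds (this.mono fun t ht => le_of_lt ht)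
  rw [Filter.Eventually, mem_nhdsGT_iff_exists_Ioo_subset] at hineq
  obtain ⟨u, (hu : 0 < u), husub⟩ := hineq
  -- final choice of δ
  set δ : ℝ := min u δ₀ with hδdef
  have hδpos : 0 < δ := lt_min hu hδ₀
  have hIco : ∀ t ∈ Ico (0:ℝ) δ, t ∈ Ioo (-δ₀) δ₀ := fun t ht =>
    ⟨by linarith [ht.1, hδ₀], lt_of_lt_of_le ht.2 (min_le_right u δ₀)⟩
  have hgle : ∀ t ∈ Ico (0:ℝ) δ, ∀ i, g i (ξ t) ≤ 0 := by
    intro t ht i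
    rcases eq_or_lt_of_le ht.1 with h | h
    · rw [← h, hξ0]
      exact hfg i
    · exact husub ⟨h, lt_of_lt_of_le ht.2 (min_le_left u δ₀)⟩ i
  -- the derivative function
  set ξ' : ℝ → Vec n := deriv ξ with hξ'def
  have hdiffIoo : ∀ t ∈ Ioo (-δ₀) δ₀, HasDerivAt ξ (deriv ξ t) t := by
    intro t ht
    exact (((hξsm.differentiableOn two_ne_zero).differentiableAt
      (isOpen_Ioo.mem_nhds ht))).hasDerivAt
  refine ⟨δ, hδpos, J, K, hJ, hK, ξ, ξ', ⟨?_, ?_⟩, ?_, hξ0, ?_, ?_, ?_, ?_⟩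
  · -- first derivative
    intro t ht
    exact (hdiffIoo t (hIco t ht)).hasDerivWithinAt
  · -- differentiability of the derivative
    intro t ht
    have h1 : ContDiffOn ℝ 1 (deriv ξ) (Ioo (-δ₀) δ₀) :=
      hξsm.deriv_of_isOpen isOpen_Ioo (by norm_num)
    exact ((h1.differentiableOn one_ne_zero) t (hIco t ht)).mono fun s hs => hIco s hs
  · -- feasibility
    intro t ht
    refine ⟨hgle t ht, fun j => hzh t (hIco t ht) j, fun k => ?_⟩
    rcases mul_eq_zero.mp (hfGH k) with hGk | hHk
    · by_cases hHk : H k xb = 0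
      · -- k ∈ IGH
        have hk : k ∈ IGH G H xb := ⟨hGk, hHk⟩
        rcases mul_eq_zero.mp (hdGH k hk) with hdk | hdk
        · rw [hzG t (hIco t ht) k (Or.inl ⟨hk, hdk⟩), zero_mul]
        · rw [hzH t (hIco t ht) k (Or.inl ⟨hk, hdk⟩), mul_zero]
      · rw [hzG t (hIco t ht) k (Or.inr ⟨hGk, hHk⟩), zero_mul]
    · by_cases hGk : G k xb = 0
      · have hk : k ∈ IGH G H xb := ⟨hGk, hHk⟩
        rcases mul_eq_zero.mp (hdGH k hk) with hdk | hdk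
        · rw [hzG t (hIco t ht) k (Or.inl ⟨hk, hdk⟩), zero_mul]
        · rw [hzH t (hIco t ht) k (Or.inl ⟨hk, hdk⟩), mul_zero]
      · rw [hzH t (hIco t ht) k (Or.inr ⟨hGk, hHk⟩), mul_zero]
  · -- ξ' 0 = d
    show deriv ξ 0 = d
    exact hξd.deriv
  · -- active inequality constraints with zero derivative stay zero
    intro t ht i hi hdi
    exact hzg t (hIco t ht) i ⟨hi, hdi⟩
  · -- G constraints
    intro t ht k hk
    exact hzG t (hIco t ht) k (Or.elim hk (fun h' => Or.inr h') (fun h' => Or.inl h'))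
  · -- H constraints
    intro t ht k hk
    exact hzH t (hIco t ht) k (Or.elim hk (fun h' => Or.inr h') (fun h' => Or.inl h'))


end MPSC
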